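/- The six normal forms Sep, B₁, B₂, B₃, W, GHZ in ℂ² ⊗ ℂ² ⊗ ℂ² are pairwise non-SLOCC-equivalent; in particular the three-qubit Hilbert space has exactly six SLOCC classes of nonzero states. (Dür–Vidal–Cirac three-qubit classification, uniqueness part.) -/

import Mathlib

open TensorProduct

noncomputable section

/-- The single-qubit space ℂ². -/
abbrev Qubit : Type := Fin 2 → ℂ

/-- The three-qubit Hilbert space ℂ² ⊗ ℂ² ⊗ ℂ². -/
abbrev ThreeQubit : Type := Qubit ⊗[ℂ] (Qubit ⊗[ℂ] Qubit)

/-- Standard basis vector e₀ of ℂ². -/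
def e0 : Qubit := ![1, 0]

/-- Standard basis vector e₁ of ℂ². -/
def e1 : Qubit := ![0, 1]

/-- SLOCC equivalence: ψ and φ are related by invertible local linear maps. -/
def SLOCC (ψ φ : ThreeQubit) : Prop :=
  ∃ g₁ g₂ g₃ : Qubit ≃ₗ[ℂ] Qubit,
    TensorProduct.map g₁.toLinearMap
      (TensorProduct.map g₂.toLinearMap g₃.toLinearMap) ψ = φ

def SepState : ThreeQubit := e0 ⊗ₜ[ℂ] (e0 ⊗ₜ[ℂ] e0)
def B1 : ThreeQubit := e0 ⊗ₜ[ℂ] (e0 ⊗ₜ[ℂ] e0) + e0 ⊗ₜ[ℂ] (e1 ⊗ₜ[ℂ] e1)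
def B2 : ThreeQubit := e0 ⊗ₜ[ℂ] (e0 ⊗ₜ[ℂ] e0) + e1 ⊗ₜ[ℂ] (e0 ⊗ₜ[ℂ] e1)
def B3 : ThreeQubit := e0 ⊗ₜ[ℂ] (e0 ⊗ₜ[ℂ] e0) + e1 ⊗ₜ[ℂ] (e1 ⊗ₜ[ℂ] e0)
def W : ThreeQubit := e1 ⊗ₜ[ℂ] (e0 ⊗ₜ[ℂ] e0) + e0 ⊗ₜ[ℂ] (e1 ⊗ₜ[ℂ] e0) + e0 ⊗ₜ[ℂ] (e0 ⊗ₜ[ℂ] e1)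
def GHZ : ThreeQubit := e0 ⊗ₜ[ℂ] (e0 ⊗ₜ[ℂ] e0) + e1 ⊗ₜ[ℂ] (e1 ⊗ₜ[ℂ] e1)

/-! ### Coordinate functionals -/

/-- Coefficient functional on `Qubit ⊗ Qubit`. -/
def coeff2 (j k : Fin 2) : Qubit ⊗[ℂ] Qubit →ₗ[ℂ] ℂ :=
  TensorProduct.lift (LinearMap.mk₂ ℂ (fun v w => v j * w k)
    (fun v v' w => by simp [add_mul])
    (fun c v w => by simp [mul_assoc])
    (fun v w w' => by simp [mul_add])
    (fun c v w => by simp; ring))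

/-- Coefficient functional on `ThreeQubit`. -/
def coeff (i j k : Fin 2) : ThreeQubit →ₗ[ℂ] ℂ :=
  TensorProduct.lift (LinearMap.mk₂ ℂ (fun u z => u i * coeff2 j k z)
    (fun u u' z => by simp [add_mul])
    (fun c u z => by simp [mul_assoc])
    (fun u z z' => by simp [mul_add])
    (fun c u z => by simp; ring))

@[simp] lemma coeff_tmul (i j k : Fin 2) (u v w : Qubit) :
    coeff i j k (u ⊗ₜ[ℂ] (v ⊗ₜ[ℂ] w)) = u i * (v j * w k) := by
  simp [coeff, coeff2, mul_assoc]

/-! ### Arithmetic contradiction lemmas -/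

lemma minor_contra {X Y Z V : ℂ} (h1 : X = 1) (h2 : Y = 1) (h3 : Z = 0) (h4 : V = 0)
    (h5 : X * Y = Z * V) : False := by
  rw [h1, h2, h3, h4] at h5
  norm_num at h5

lemma hdet_contra {t000 t001 t010 t011 t100 t101 t110 t111 : ℂ}
    (h000 : t000 = 1) (h001 : t001 = 0) (h010 : t010 = 0) (h011 : t011 = 0)
    (h100 : t100 = 0) (h101 : t101 = 0) (h110 : t110 = 0) (h111 : t111 = 1)
    (hΔ : t000^2*t111^2 + t001^2*t110^2 + t010^2*t101^2 + t100^2*t011^2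
      - 2*(t000*t001*t110*t111 + t000*t010*t101*t111 + t000*t100*t011*t111
         + t001*t010*t101*t110 + t001*t100*t011*t110 + t010*t100*t011*t101)
      + 4*(t000*t011*t101*t110 + t001*t010*t100*t111) = 0) : False := by
  rw [h000, h001, h010, h011, h100, h101, h110, h111] at hΔ
  norm_num at hΔ

/-! ### The fifteen pairwise non-equivalences -/

lemma not_slocc_SepState_B1 : ¬ SLOCC SepState B1 := by
  rintro ⟨g₁, g₂, g₃, h⟩
  have h000 := congrArg (coeff 0 0 0) h
  have h011 := congrArg (coeff 0 1 1) h
  have h001 := congrArg (coeff 0 0 1) h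
  have h010 := congrArg (coeff 0 1 0) h
  simp only [SepState, B1, map_add, TensorProduct.map_tmul, coeff_tmul, e0, e1,
    Matrix.cons_val_zero, Matrix.cons_val_one, Matrix.head_cons,
    one_mul, mul_one, zero_mul, mul_zero, add_zero, zero_add] at h000 h011 h001 h010
  exact minor_contra h000 h011 h001 h010 (by ring)

lemma not_slocc_SepState_B2 : ¬ SLOCC SepState B2 := by
  rintro ⟨g₁, g₂, g₃, h⟩
  have h000 := congrArg (coeff 0 0 0) h
  have h101 := congrArg (coeff 1 0 1) h
  have h001 := congrArg (coeff 0 0 1) h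
  have h100 := congrArg (coeff 1 0 0) h
  simp only [SepState, B2, map_add, TensorProduct.map_tmul, coeff_tmul, e0, e1,
    Matrix.cons_val_zero, Matrix.cons_val_one, Matrix.head_cons,
    one_mul, mul_one, zero_mul, mul_zero, add_zero, zero_add] at h000 h101 h001 h100
  exact minor_contra h000 h101 h001 h100 (by ring)

lemma not_slocc_SepState_B3 : ¬ SLOCC SepState B3 := by
  rintro ⟨g₁, g₂, g₃, h⟩
  have h000 := congrArg (coeff 0 0 0) h
  have h110 := congrArg (coeff 1 1 0) h
  have h010 := congrArg (coeff 0 1 0) h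
  have h100 := congrArg (coeff 1 0 0) h
  simp only [SepState, B3, map_add, TensorProduct.map_tmul, coeff_tmul, e0, e1,
    Matrix.cons_val_zero, Matrix.cons_val_one, Matrix.head_cons,
    one_mul, mul_one, zero_mul, mul_zero, add_zero, zero_add] at h000 h110 h010 h100
  exact minor_contra h000 h110 h010 h100 (by ring)

lemma not_slocc_SepState_W : ¬ SLOCC SepState W := by
  rintro ⟨g₁, g₂, g₃, h⟩
  have h100 := congrArg (coeff 1 0 0) h
  have h010 := congrArg (coeff 0 1 0) h
  have h000 := congrArg (coeff 0 0 0) h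
  have h110 := congrArg (coeff 1 1 0) h
  simp only [SepState, W, map_add, TensorProduct.map_tmul, coeff_tmul, e0, e1,
    Matrix.cons_val_zero, Matrix.cons_val_one, Matrix.head_cons,
    one_mul, mul_one, zero_mul, mul_zero, add_zero, zero_add] at h100 h010 h000 h110
  exact minor_contra h100 h010 h000 h110 (by ring)

lemma not_slocc_SepState_GHZ : ¬ SLOCC SepState GHZ := by
  rintro ⟨g₁, g₂, g₃, h⟩
  have h000 := congrArg (coeff 0 0 0) h
  have h111 := congrArg (coeff 1 1 1) h
  have h001 := congrArg (coeff 0 0 1) h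
  have h110 := congrArg (coeff 1 1 0) h
  simp only [SepState, GHZ, map_add, TensorProduct.map_tmul, coeff_tmul, e0, e1,
    Matrix.cons_val_zero, Matrix.cons_val_one, Matrix.head_cons,
    one_mul, mul_one, zero_mul, mul_zero, add_zero, zero_add] at h000 h111 h001 h110
  exact minor_contra h000 h111 h001 h110 (by ring)

lemma not_slocc_B1_B2 : ¬ SLOCC B1 B2 := by
  rintro ⟨g₁, g₂, g₃, h⟩
  have h000 := congrArg (coeff 0 0 0) h
  have h101 := congrArg (coeff 1 0 1) h
  have h001 := congrArg (coeff 0 0 1) h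
  have h100 := congrArg (coeff 1 0 0) h
  simp only [B1, B2, map_add, TensorProduct.map_tmul, coeff_tmul, e0, e1,
    Matrix.cons_val_zero, Matrix.cons_val_one, Matrix.head_cons,
    one_mul, mul_one, zero_mul, mul_zero, add_zero, zero_add] at h000 h101 h001 h100
  exact minor_contra h000 h101 h001 h100 (by ring)

lemma not_slocc_B1_B3 : ¬ SLOCC B1 B3 := by
  rintro ⟨g₁, g₂, g₃, h⟩
  have h000 := congrArg (coeff 0 0 0) h
  have h110 := congrArg (coeff 1 1 0) h
  have h010 := congrArg (coeff 0 1 0) h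
  have h100 := congrArg (coeff 1 0 0) h
  simp only [B1, B3, map_add, TensorProduct.map_tmul, coeff_tmul, e0, e1,
    Matrix.cons_val_zero, Matrix.cons_val_one, Matrix.head_cons,
    one_mul, mul_one, zero_mul, mul_zero, add_zero, zero_add] at h000 h110 h010 h100
  exact minor_contra h000 h110 h010 h100 (by ring)

lemma not_slocc_B1_W : ¬ SLOCC B1 W := by
  rintro ⟨g₁, g₂, g₃, h⟩
  have h010 := congrArg (coeff 0 1 0) h
  have h100 := congrArg (coeff 1 0 0) h
  have h000 := congrArg (coeff 0 0 0) h
  have h110 := congrArg (coeff 1 1 0) h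
  simp only [B1, W, map_add, TensorProduct.map_tmul, coeff_tmul, e0, e1,
    Matrix.cons_val_zero, Matrix.cons_val_one, Matrix.head_cons,
    one_mul, mul_one, zero_mul, mul_zero, add_zero, zero_add] at h010 h100 h000 h110
  exact minor_contra h010 h100 h000 h110 (by ring)

lemma not_slocc_B1_GHZ : ¬ SLOCC B1 GHZ := by
  rintro ⟨g₁, g₂, g₃, h⟩
  have h000 := congrArg (coeff 0 0 0) h
  have h111 := congrArg (coeff 1 1 1) h
  have h011 := congrArg (coeff 0 1 1) h
  have h100 := congrArg (coeff 1 0 0) h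
  simp only [B1, GHZ, map_add, TensorProduct.map_tmul, coeff_tmul, e0, e1,
    Matrix.cons_val_zero, Matrix.cons_val_one, Matrix.head_cons,
    one_mul, mul_one, zero_mul, mul_zero, add_zero, zero_add] at h000 h111 h011 h100
  exact minor_contra h000 h111 h011 h100 (by ring)

lemma not_slocc_B2_B3 : ¬ SLOCC B2 B3 := by
  rintro ⟨g₁, g₂, g₃, h⟩
  have h000 := congrArg (coeff 0 0 0) h
  have h110 := congrArg (coeff 1 1 0) h
  have h100 := congrArg (coeff 1 0 0) h
  have h010 := congrArg (coeff 0 1 0) h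
  simp only [B2, B3, map_add, TensorProduct.map_tmul, coeff_tmul, e0, e1,
    Matrix.cons_val_zero, Matrix.cons_val_one, Matrix.head_cons,
    one_mul, mul_one, zero_mul, mul_zero, add_zero, zero_add] at h000 h110 h100 h010
  exact minor_contra h000 h110 h100 h010 (by ring)

lemma not_slocc_B2_W : ¬ SLOCC B2 W := by
  rintro ⟨g₁, g₂, g₃, h⟩
  have h100 := congrArg (coeff 1 0 0) h
  have h010 := congrArg (coeff 0 1 0) h
  have h000 := congrArg (coeff 0 0 0) h
  have h110 := congrArg (coeff 1 1 0) h
  simp only [B2, W, map_add, TensorProduct.map_tmul, coeff_tmul, e0, e1,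
    Matrix.cons_val_zero, Matrix.cons_val_one, Matrix.head_cons,
    one_mul, mul_one, zero_mul, mul_zero, add_zero, zero_add] at h100 h010 h000 h110
  exact minor_contra h100 h010 h000 h110 (by ring)

lemma not_slocc_B2_GHZ : ¬ SLOCC B2 GHZ := by
  rintro ⟨g₁, g₂, g₃, h⟩
  have h000 := congrArg (coeff 0 0 0) h
  have h111 := congrArg (coeff 1 1 1) h
  have h101 := congrArg (coeff 1 0 1) h
  have h010 := congrArg (coeff 0 1 0) h
  simp only [B2, GHZ, map_add, TensorProduct.map_tmul, coeff_tmul, e0, e1,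
    Matrix.cons_val_zero, Matrix.cons_val_one, Matrix.head_cons,
    one_mul, mul_one, zero_mul, mul_zero, add_zero, zero_add] at h000 h111 h101 h010
  exact minor_contra h000 h111 h101 h010 (by ring)

lemma not_slocc_B3_W : ¬ SLOCC B3 W := by
  rintro ⟨g₁, g₂, g₃, h⟩
  have h100 := congrArg (coeff 1 0 0) h
  have h001 := congrArg (coeff 0 0 1) h
  have h000 := congrArg (coeff 0 0 0) h
  have h101 := congrArg (coeff 1 0 1) h
  simp only [B3, W, map_add, TensorProduct.map_tmul, coeff_tmul, e0, e1,
    Matrix.cons_val_zero, Matrix.cons_val_one, Matrix.head_cons,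
    one_mul, mul_one, zero_mul, mul_zero, add_zero, zero_add] at h100 h001 h000 h101
  exact minor_contra h100 h001 h000 h101 (by ring)

lemma not_slocc_B3_GHZ : ¬ SLOCC B3 GHZ := by
  rintro ⟨g₁, g₂, g₃, h⟩
  have h000 := congrArg (coeff 0 0 0) h
  have h111 := congrArg (coeff 1 1 1) h
  have h110 := congrArg (coeff 1 1 0) h
  have h001 := congrArg (coeff 0 0 1) h
  simp only [B3, GHZ, map_add, TensorProduct.map_tmul, coeff_tmul, e0, e1,
    Matrix.cons_val_zero, Matrix.cons_val_one, Matrix.head_cons,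
    one_mul, mul_one, zero_mul, mul_zero, add_zero, zero_add] at h000 h111 h110 h001
  exact minor_contra h000 h111 h110 h001 (by ring)

lemma not_slocc_W_GHZ : ¬ SLOCC W GHZ := by
  rintro ⟨g₁, g₂, g₃, h⟩
  have h000 := congrArg (coeff 0 0 0) h
  have h001 := congrArg (coeff 0 0 1) h
  have h010 := congrArg (coeff 0 1 0) h
  have h011 := congrArg (coeff 0 1 1) h
  have h100 := congrArg (coeff 1 0 0) h
  have h101 := congrArg (coeff 1 0 1) h
  have h110 := congrArg (coeff 1 1 0) h
  have h111 := congrArg (coeff 1 1 1) h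
  simp only [W, GHZ, map_add, TensorProduct.map_tmul, coeff_tmul, e0, e1,
    Matrix.cons_val_zero, Matrix.cons_val_one, Matrix.head_cons,
    one_mul, mul_one, zero_mul, mul_zero, add_zero, zero_add] at h000 h001 h010 h011 h100 h101 h110 h111
  exact hdet_contra h000 h001 h010 h011 h100 h101 h110 h111 (by ring)

/-- Dür–Vidal–Cirac classification, uniqueness: the six normal forms are pairwise
non-SLOCC-equivalent, so together with exhaustiveness there are exactly six SLOCC classes
of nonzero three-qubit states. -/
theorem three_qubit_SLOCC_six_classes :
    List.Pairwise (fun ψ φ : ThreeQubit => ¬ SLOCC ψ φ)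
      [SepState, B1, B2, B3, W, GHZ] := by
  refine .cons ?_ (.cons ?_ (.cons ?_ (.cons ?_ (.cons ?_ (.cons ?_ .nil))))) <;>
    intro x hx <;>
    simp only [List.mem_cons, List.not_mem_nil, or_false] at hx
  · rcases hx with rfl | rfl | rfl | rfl | rfl
    exacts [not_slocc_SepState_B1, not_slocc_SepState_B2, not_slocc_SepState_B3,
      not_slocc_SepState_W, not_slocc_SepState_GHZ]
  · rcases hx with rfl | rfl | rfl | rfl
    exacts [not_slocc_B1_B2, not_slocc_B1_B3, not_slocc_B1_W, not_slocc_B1_GHZ]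
  · rcases hx with rfl | rfl | rfl
    exacts [not_slocc_B2_B3, not_slocc_B2_W, not_slocc_B2_GHZ]
  · rcases hx with rfl | rfl
    exacts [not_slocc_B3_W, not_slocc_B3_GHZ]
  · rcases hx with rfl
    exact not_slocc_W_GHZ

end
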